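/- arXiv:1101.2721 — 2 statements merged into one kernel-verified Lean document; each statement's English description precedes it below -/
import Mathlib

section
/- Suppose nonnegative reals r_1, r_2, C_1, C_2 satisfy r_1 + r_2 ≤ C_1 + C_2, and set c_j = max(0, r_1 + r_2 − C_{j̄}). If r_{11,p}, r_{12,p} satisfy 0 ≤ r_{11,p} ≤ c_1, 0 ≤ r_{12,p} ≤ c_2, and c_1 + c_2 − r_2 ≤ r_{11,p} + r_{12,p} ≤ r_1, and we define r_{21,p} = c_1 − r_{11,p}, r_{22,p} = c_2 − r_{12,p}, then all four private rates are nonnegative, r_{11,p} + r_{12,p} ≤ r_1, r_{21,p} + r_{22,p} ≤ r_2, and for each j the backhaul constraint r_1 + r_2 − (r_{1 j̄,p} + r_{2 j̄,p}) ≤ C_j holds. -/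
/-- Feasibility of the polytope parametrization: choosing `(r_{11,p}, r_{12,p})` in the
polytope and setting `r_{21,p} = c_1 − r_{11,p}`, `r_{22,p} = c_2 − r_{12,p}` yields
nonnegative private rates satisfying the per-user and backhaul constraints. -/
theorem polytope_parametrization_feasible
    (r1 r2 C1 C2 c1 c2 r11p r12p r21p r22p : ℝ)
    (hr1 : 0 ≤ r1) (hr2 : 0 ≤ r2) (hC1 : 0 ≤ C1) (hC2 : 0 ≤ C2)
    (hsum : r1 + r2 ≤ C1 + C2)
    (hc1 : c1 = max 0 (r1 + r2 - C2)) (hc2 : c2 = max 0 (r1 + r2 - C1))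
    (h11l : 0 ≤ r11p) (h11u : r11p ≤ c1)
    (h12l : 0 ≤ r12p) (h12u : r12p ≤ c2)
    (hL : c1 + c2 - r2 ≤ r11p + r12p) (hU : r11p + r12p ≤ r1)
    (h21 : r21p = c1 - r11p) (h22 : r22p = c2 - r12p) :
    (0 ≤ r11p ∧ 0 ≤ r12p ∧ 0 ≤ r21p ∧ 0 ≤ r22p) ∧
    r11p + r12p ≤ r1 ∧ r21p + r22p ≤ r2 ∧
    r1 + r2 - (r12p + r22p) ≤ C1 ∧ r1 + r2 - (r11p + r21p) ≤ C2 := by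
  subst h21 h22
  have hc1' : r1 + r2 - C2 ≤ c1 := hc1 ▸ le_max_right _ _
  have hc2' : r1 + r2 - C1 ≤ c2 := hc2 ▸ le_max_right _ _
  refine ⟨⟨h11l, h12l, by linarith, by linarith⟩, hU, by linarith, by linarith, by linarith⟩
end

section
/- Let h ∈ ℂ^{1×n} be a nonzero row vector, R = h^H h, and suppose V ⪰ 0 satisfies Γ(σ² + I₀) = Tr[R V] for some Γ, σ², I₀ > 0. Then there exists a rank-one V' = w w^H with Tr[R V'] = Tr[R V] and Tr V' ≤ Tr V; specifically w can be chosen proportional to the component of an appropriate vector, so the SDP relaxation of the single-rank-one-channel beamforming constraint admits a rank-one optimal solution. -/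
open Matrix ComplexOrder

lemma cs_sum (n : ℕ) (a y : Fin n → ℂ) :
    Complex.normSq (∑ k, (starRingEnd ℂ) (a k) * y k) ≤
      (∑ k, Complex.normSq (a k)) * (∑ k, Complex.normSq (y k)) := by
  set a' : EuclideanSpace ℂ (Fin n) := WithLp.toLp 2 a with ha
  set y' : EuclideanSpace ℂ (Fin n) := WithLp.toLp 2 y with hy
  have h0 := norm_inner_le_norm (𝕜 := ℂ) a' y'
  rw [PiLp.inner_apply] at h0
  simp only [RCLike.inner_apply] at h0
  have h2 : ‖∑ k, (starRingEnd ℂ) (a' k) * y' k‖ ^ 2 ≤ (‖a'‖ * ‖y'‖) ^ 2 :=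
    pow_le_pow_left₀ (norm_nonneg _) (by simpa only [mul_comm] using h0) 2
  rw [mul_pow, EuclideanSpace.norm_eq, EuclideanSpace.norm_eq,
    Real.sq_sqrt (by positivity), Real.sq_sqrt (by positivity)] at h2
  simpa [Complex.normSq_eq_norm_sq, sq, a', y'] using h2

lemma traceR (n : ℕ) (h : Fin n → ℂ) (M : Matrix (Fin n) (Fin n) ℂ) :
    ((vecMulVec (star h) h) * M).trace = h ⬝ᵥ (M *ᵥ star h) := by
  simp only [trace, diag, mul_apply, vecMulVec_apply, dotProduct, mulVec,
    Pi.star_apply, Finset.mul_sum]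
  rw [Finset.sum_comm]
  refine Finset.sum_congr rfl fun j _ => Finset.sum_congr rfl fun i _ => by ring

/-- Rank-one solution property: if `R = hᴴh` has rank one and `V ⪰ 0` meets the SINR
constraint with equality, there is a rank-one `V' = wwᴴ` with the same useful received
power `Tr[RV'] = Tr[RV]` and no larger trace. -/
theorem sdp_relaxation_rank_one_solution
    (n : ℕ) (h : Fin n → ℂ) (hh : h ≠ 0)
    (Γ σ2 I0 : ℝ) (hΓ : 0 < Γ) (hσ : 0 < σ2) (hI : 0 < I0)
    (V : Matrix (Fin n) (Fin n) ℂ) (hV : V.PosSemidef)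
    (hcon : Γ * (σ2 + I0) = ((vecMulVec (star h) h) * V).trace.re) :
    ∃ w : Fin n → ℂ,
      ((vecMulVec (star h) h) * (vecMulVec w (star w))).trace =
        ((vecMulVec (star h) h) * V).trace ∧
      (vecMulVec w (star w)).trace.re ≤ V.trace.re := by
  classical
  open scoped MatrixOrder Matrix.Norms.L2Operator in
  obtain ⟨B, hB0⟩ :=
    CStarAlgebra.nonneg_iff_eq_star_mul_self.mp hV.nonneg
  have hB : V = Bᴴ * B := by rw [hB0]; rfl
  set u : Fin n → ℂ := star h with hu
  set y : Fin n → ℂ := B *ᵥ u with hy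
  set t : ℂ := ((vecMulVec (star h) h) * V).trace with ht
  have htval : t = h ⬝ᵥ (V *ᵥ u) := traceR n h V
  -- useful expression for V *ᵥ u in terms of B
  have hVu : ∀ i, (V *ᵥ u) i = ∑ k, (starRingEnd ℂ) (B k i) * y k := by
    intro i
    rw [hB, ← mulVec_mulVec, ← hy]
    simp [mulVec, dotProduct, conjTranspose_apply]
  -- t as a sum of normSq
  have hty : t = ((∑ k, Complex.normSq (y k) : ℝ) : ℂ) := by
    rw [htval]
    simp only [dotProduct, hVu, Finset.mul_sum]
    rw [Finset.sum_comm]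
    push_cast
    refine Finset.sum_congr rfl fun k _ => ?_
    have hyk : (starRingEnd ℂ) (y k) = ∑ j, (starRingEnd ℂ) (B k j) * h j := by
      simp [hy, mulVec, dotProduct, hu]
    have e1 : ∑ x, h x * ((starRingEnd ℂ) (B k x) * y k)
        = (∑ j, (starRingEnd ℂ) (B k j) * h j) * y k := by
      rw [Finset.sum_mul]
      exact Finset.sum_congr rfl fun j _ => by ring
    rw [e1, ← hyk, ← Complex.normSq_eq_conj_mul_self]
  have htre : t.re = ∑ k, Complex.normSq (y k) := by rw [hty, Complex.ofReal_re]
  have htpos : 0 < t.re := by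
    rw [← hcon]; positivity
  have htreal : t = ((t.re : ℝ) : ℂ) := by rw [htre, ← hty]
  set s : ℝ := Real.sqrt t.re with hs
  have hspos : 0 < s := Real.sqrt_pos.mpr htpos
  have hs2 : s * s = t.re := Real.mul_self_sqrt htpos.le
  refine ⟨fun i => (V *ᵥ u) i / (s : ℂ), ?_, ?_⟩
  · rw [traceR]
    have hdot : ∑ j, h j * ((V *ᵥ u) j / (s : ℂ)) = (s : ℂ) := by
      simp only [← mul_div_assoc]
      rw [← Finset.sum_div]
      have : ∑ j, h j * (V *ᵥ u) j = t := by
        rw [htval]; rfl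
      rw [this, htreal, ← hs2]
      push_cast
      field_simp
    have key : h ⬝ᵥ (vecMulVec (fun i => (V *ᵥ u) i / (s : ℂ))
        (star fun i => (V *ᵥ u) i / (s : ℂ)) *ᵥ star h) =
        (∑ j, h j * ((V *ᵥ u) j / (s : ℂ))) *
          (∑ i, (starRingEnd ℂ) ((V *ᵥ u) i / (s : ℂ)) * u i) := by
      simp only [dotProduct, mulVec, vecMulVec_apply, Pi.star_apply, Finset.sum_mul,
        Finset.mul_sum, RCLike.star_def, hu]
      rw [Finset.sum_comm]
      exact Finset.sum_congr rfl fun j _ => Finset.sum_congr rfl fun i _ => by ring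
    rw [key, hdot]
    have hconj : ∑ i, (starRingEnd ℂ) ((V *ᵥ u) i / (s : ℂ)) * u i = (s : ℂ) := by
      have : ∑ i, (starRingEnd ℂ) ((V *ᵥ u) i / (s : ℂ)) * u i =
          (starRingEnd ℂ) (∑ j, h j * ((V *ᵥ u) j / (s : ℂ))) := by
        rw [map_sum]
        refine Finset.sum_congr rfl fun i _ => ?_
        simp only [_root_.map_mul, hu, Pi.star_apply, RCLike.star_def]
        ring
      rw [this, hdot, Complex.conj_ofReal]
    rw [hconj, htreal, ← hs2]
    push_cast
    ring
  · -- trace bound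
    have htr1 : (vecMulVec (fun i => (V *ᵥ u) i / (s : ℂ))
        (star fun i => (V *ᵥ u) i / (s : ℂ))).trace.re =
        ∑ i, Complex.normSq ((V *ᵥ u) i) / t.re := by
      simp only [trace, diag, vecMulVec_apply, Pi.star_apply, RCLike.star_def,
        Complex.mul_conj]
      rw [Complex.re_sum]
      refine Finset.sum_congr rfl fun i _ => ?_
      rw [Complex.ofReal_re, map_div₀ Complex.normSq, Complex.normSq_ofReal, hs2]
    have htr2 : V.trace.re = ∑ i, ∑ k, Complex.normSq (B k i) := by
      simp only [trace, diag]
      rw [Complex.re_sum]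
      refine Finset.sum_congr rfl fun i _ => ?_
      have : V i i = ((∑ k, Complex.normSq (B k i) : ℝ) : ℂ) := by
        rw [hB]
        simp only [mul_apply, conjTranspose_apply]
        push_cast
        exact Finset.sum_congr rfl fun k _ => (Complex.normSq_eq_conj_mul_self).symm
      rw [this, Complex.ofReal_re]
    rw [htr1, htr2]
    rw [← Finset.sum_div, div_le_iff₀ htpos]
    calc ∑ i, Complex.normSq ((V *ᵥ u) i)
        ≤ ∑ i, (∑ k, Complex.normSq (B k i)) * (∑ k, Complex.normSq (y k)) := by
          refine Finset.sum_le_sum fun i _ => ?_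
          rw [hVu i]
          exact cs_sum n (fun k => B k i) y
      _ = (∑ i, ∑ k, Complex.normSq (B k i)) * t.re := by
          rw [← Finset.sum_mul, htre]
end
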